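/- Let S be a finite set with |S| = n, and let k' ≤ k ≤ n with C(n,k) = λ·C(n,k'). Then there exists an injective map ψ from the multiset consisting of λ copies of each k'-subset of S into the k-subsets of S such that each k'-subset is mapped (in each of its λ copies) to a k-subset containing it, and ψ is bijective onto the k-subsets. -/

import Mathlib

/-- Number of `k`-subsets of `S` containing a fixed subset `B`. -/
lemma count_supersets {α : Type*} [DecidableEq α] (S B : Finset α) (k : ℕ)
    (hBS : B ⊆ S) (hkB : B.card ≤ k) :
    ((S.powersetCard k).filter (fun A => B ⊆ A)).card
      = (S.card - B.card).choose (k - B.card) := by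
  rw [← Finset.card_sdiff_of_subset hBS, ← Finset.card_powersetCard (k - B.card) (S \ B)]
  refine Finset.card_bij' (fun A _ => A \ B) (fun C _ => C ∪ B) ?_ ?_ ?_ ?_
  · intro A hA
    simp only [Finset.mem_filter, Finset.mem_powersetCard] at hA
    obtain ⟨⟨hAS, hAc⟩, hBA⟩ := hA
    rw [Finset.mem_powersetCard]
    constructor
    · exact Finset.sdiff_subset_sdiff hAS le_rfl
    · rw [Finset.card_sdiff_of_subset hBA, hAc]
  · intro C hC
    rw [Finset.mem_powersetCard] at hC
    obtain ⟨hCS, hCc⟩ := hC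
    have hCB : Disjoint C B := (Finset.sdiff_disjoint.mono_left hCS)
    simp only [Finset.mem_filter, Finset.mem_powersetCard]
    refine ⟨⟨?_, ?_⟩, Finset.subset_union_right⟩
    · exact Finset.union_subset (hCS.trans (Finset.sdiff_subset)) hBS
    · rw [Finset.card_union_of_disjoint hCB, hCc]
      omega
  · intro A hA
    simp only [Finset.mem_filter, Finset.mem_powersetCard] at hA
    exact Finset.sdiff_union_of_subset hA.2
  · intro C hC
    rw [Finset.mem_powersetCard] at hC
    have hCB : Disjoint C B := (Finset.sdiff_disjoint.mono_left hC.1)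
    show (C ∪ B) \ B = C
    rw [Finset.union_sdiff_right, Finset.sdiff_eq_self_of_disjoint hCB]

/-- If `C(n,k) = l * C(n,k')` with `k' ≤ k ≤ n` and `|S| = n`, then there is a
bijection `ψ` from `l` disjoint copies of the `k'`-subsets of `S` onto the
`k`-subsets of `S` sending each copy of a `k'`-subset to a `k`-subset
containing it. -/
theorem bijective_multiembedding {α : Type*} [DecidableEq α] (S : Finset α)
    (n k k' l : ℕ) (hS : S.card = n) (hk' : k' ≤ k) (hk : k ≤ n)
    (h : n.choose k = l * n.choose k') :
    ∃ ψ : (Fin l × {B // B ∈ S.powersetCard k'}) ≃ {A // A ∈ S.powersetCard k},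
      ∀ (i : Fin l) (B : {B // B ∈ S.powersetCard k'}),
        (B : Finset α) ⊆ (ψ (i, B) : Finset α) := by
  classical
  set ι := Fin l × {B // B ∈ S.powersetCard k'} with hι
  set τ := {A // A ∈ S.powersetCard k} with hτ
  set t : ι → Finset τ := fun x => Finset.univ.filter (fun A => (x.2 : Finset α) ⊆ (A : Finset α))
    with ht
  have hd : ∀ x : ι, (t x).card = (n - k').choose (k - k') := by
    intro x
    obtain ⟨hBS, hBc⟩ := Finset.mem_powersetCard.1 x.2.2
    have : (t x).card = ((S.powersetCard k).filter (fun A => (x.2 : Finset α) ⊆ A)).card := by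
      refine Finset.card_bij (fun A _ => (A : Finset α)) ?_ ?_ ?_
      · intro A hA
        simp only [ht, Finset.mem_filter, Finset.mem_univ, true_and] at hA
        exact Finset.mem_filter.2 ⟨A.2, hA⟩
      · intro A₁ _ A₂ _ hval; exact Subtype.ext hval
      · intro A hA
        rw [Finset.mem_filter] at hA
        exact ⟨⟨A, hA.1⟩, by simp [ht, hA.2], rfl⟩
    rw [this, count_supersets S _ k hBS (hBc.trans_le hk'), hBc, hS]
  -- the right degree
  have hd2 : ∀ y : τ, (Finset.univ.filter (fun x : ι => y ∈ t x)).card = l * k.choose k' := by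
    intro y
    obtain ⟨hAS, hAc⟩ := Finset.mem_powersetCard.1 y.2
    have h1 : (Finset.univ.filter (fun x : ι => y ∈ t x))
        = Finset.univ ×ˢ (Finset.univ.filter
            (fun B : {B // B ∈ S.powersetCard k'} => (B : Finset α) ⊆ (y : Finset α))) := by
      ext ⟨i, B⟩
      rw [Finset.mem_product]
      simp [ht]
    rw [h1, Finset.card_product, Finset.card_univ, Fintype.card_fin]
    congr 1
    have h2 : (Finset.univ.filter
        (fun B : {B // B ∈ S.powersetCard k'} => (B : Finset α) ⊆ (y : Finset α))).card
        = ((S.powersetCard k').filter (fun B => B ⊆ (y : Finset α))).card := by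
      refine Finset.card_bij (fun B _ => (B : Finset α)) ?_ ?_ ?_
      · intro B hB
        simp only [Finset.mem_filter, Finset.mem_univ, true_and] at hB
        exact Finset.mem_filter.2 ⟨B.2, hB⟩
      · intro B₁ _ B₂ _ hval; exact Subtype.ext hval
      · intro B hB
        rw [Finset.mem_filter] at hB
        exact ⟨⟨B, hB.1⟩, by simp [hB.2], rfl⟩
    have h3 : (S.powersetCard k').filter (fun B => B ⊆ (y : Finset α))
        = (y : Finset α).powersetCard k' := by
      ext B
      simp only [Finset.mem_filter, Finset.mem_powersetCard]
      constructor
      · rintro ⟨⟨_, hBc⟩, hBy⟩; exact ⟨hBy, hBc⟩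
      · rintro ⟨hBy, hBc⟩; exact ⟨⟨hBy.trans hAS, hBc⟩, hBy⟩
    rw [h2, h3, Finset.card_powersetCard, hAc]
  -- the two degrees agree
  have hchoosepos : 0 < n.choose k' := Nat.choose_pos (hk'.trans hk)
  have hdd : (n - k').choose (k - k') = l * k.choose k' := by
    have hmul := Nat.choose_mul (n := n) hk'
    rw [h] at hmul
    have : n.choose k' * (l * k.choose k') = n.choose k' * ((n - k').choose (k - k')) := by
      rw [← hmul]; ring
    exact (Nat.eq_of_mul_eq_mul_left hchoosepos this).symm
  -- Hall's condition
  have hall : ∀ s : Finset ι, s.card ≤ (s.biUnion t).card := by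
    intro s
    set d := (n - k').choose (k - k') with hdef
    have hdpos : 0 < d := Nat.choose_pos (by omega)
    have key : s.card * d ≤ (s.biUnion t).card * d := by
      calc s.card * d = ∑ x ∈ s, (t x).card := by
            rw [Finset.sum_congr rfl (fun x _ => hd x), Finset.sum_const, smul_eq_mul]
        _ = ∑ x ∈ s, ((s.biUnion t).filter (fun y => y ∈ t x)).card := by
            apply Finset.sum_congr rfl
            intro x hx
            congr 1
            rw [Finset.filter_mem_eq_inter]
            exact (Finset.inter_eq_right.2 (Finset.subset_biUnion_of_mem t hx)).symm
        _ = ∑ y ∈ s.biUnion t, (s.filter (fun x => y ∈ t x)).card := by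
            simp_rw [Finset.card_filter]
            exact Finset.sum_comm
        _ ≤ ∑ y ∈ s.biUnion t, (Finset.univ.filter (fun x : ι => y ∈ t x)).card := by
            apply Finset.sum_le_sum
            intro y _
            exact Finset.card_le_card (Finset.filter_subset_filter _ (Finset.subset_univ s))
        _ = (s.biUnion t).card * d := by
            rw [Finset.sum_congr rfl (fun y _ => hd2 y), Finset.sum_const, smul_eq_mul, hdd]
    exact Nat.le_of_mul_le_mul_right key hdpos
  obtain ⟨f, hfinj, hft⟩ := (Finset.all_card_le_biUnion_card_iff_exists_injective t).1 hall
  have hcard : Fintype.card ι = Fintype.card τ := by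
    simp only [hι, hτ, Fintype.card_prod, Fintype.card_fin, Fintype.card_coe,
      Finset.card_powersetCard, hS]
    omega
  have hfbij : Function.Bijective f := (Fintype.bijective_iff_injective_and_card f).2 ⟨hfinj, hcard⟩
  refine ⟨Equiv.ofBijective f hfbij, ?_⟩
  intro i B
  have := hft (i, B)
  simp only [ht, Finset.mem_filter] at this
  exact this.2
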